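/- Let C ≥ 1, T > 0, and let (γ^(k))_{k≥1} and (γ̃^(k))_{k≥1} be two families of continuous functions γ^(k), γ̃^(k) : [0,T]×[0,1]^k → ℝ, each satisfying the limiting BBGKY hierarchy on [0,T], such that γ^(k)(0,·) = γ̃^(k)(0,·) for every k and sup_{t∈[0,T], x⃗∈[0,1]^k} |γ^(k)(t,x⃗)| ≤ C^k and sup_{t∈[0,T], x⃗∈[0,1]^k} |γ̃^(k)(t,x⃗)| ≤ C^k for every k ≥ 1. Then for every k ≥ 1, every M ≥ 1 and every t ∈ [0,T], sup_{x⃗∈[0,1]^k} |γ^(k)(t,x⃗) − γ̃^(k)(t,x⃗)| ≤ 2 C^{k+M} ( k(k+1)⋯(k+M−1) / M! ) t^M. -/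

import Mathlib

open MeasureTheory Real

/-- Centered Gaussian density with variance `t`. -/
noncomputable def gaussD (t x : ℝ) : ℝ :=
  (2 * Real.pi * t) ^ (-(1:ℝ)/2) * Real.exp (-x ^ 2 / (2 * t))

/-- The Neumann heat kernel on `[0,1]` (transition density of reflected BM). -/
noncomputable def heatK (t x y : ℝ) : ℝ :=
  ∑' n : ℤ, (gaussD t (x - y + 2 * (n : ℝ)) + gaussD t (x + y + 2 * (n : ℝ)))

/-- The unit box `[0,1]^k`. -/
def unitBox (k : ℕ) : Set (Fin k → ℝ) := Set.univ.pi fun _ => Set.Icc (0:ℝ) 1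

/-- The `k`-fold Neumann heat semigroup:
`P^(k)_t Φ(x) = ∫_{[0,1]^k} Φ(y) ∏ᵢ p(t,xᵢ,yᵢ) dy` for `t > 0`, and `P^(k)_0 Φ = Φ`. -/
noncomputable def Ptk (k : ℕ) (t : ℝ) (Φ : (Fin k → ℝ) → ℝ) (x : Fin k → ℝ) : ℝ :=
  if t = 0 then Φ x else ∫ y in unitBox k, Φ y * ∏ i, heatK t (x i) (y i)

/-- A family `(γ^(k))_{k≥1}` of continuous functions on `[0,T]×[0,1]^k` satisfies the
limiting BBGKY hierarchy on `[0,T]` if for every `k ≥ 1`, `t ∈ [0,T]`, `x⃗ ∈ [0,1]^k`,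
`γ^(k)(t,x⃗) = P^(k)_t γ^(k)(0,·)(x⃗)
  − Σᵢ ∫₀ᵗ P^(k)_{t−s}( z⃗ ↦ γ^(k+1)(s,(z₁,…,z_k,zᵢ)) )(x⃗) ds`. -/
def SatisfiesLimitingHierarchy (T : ℝ) (γ : (k : ℕ) → ℝ → (Fin k → ℝ) → ℝ) : Prop :=
  (∀ k : ℕ, 1 ≤ k →
    ContinuousOn (fun q : ℝ × (Fin k → ℝ) => γ k q.1 q.2)
      (Set.Icc (0:ℝ) T ×ˢ unitBox k)) ∧
  ∀ k : ℕ, 1 ≤ k → ∀ t ∈ Set.Icc (0:ℝ) T, ∀ x ∈ unitBox k,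
    γ k t x = Ptk k t (γ k 0) x
      - ∑ i : Fin k, ∫ s in (0:ℝ)..t,
          Ptk k (t - s) (fun z => γ (k+1) s (Fin.snoc z (z i))) x


open Filter Topology

lemma gaussD_nonneg (t x : ℝ) (ht : 0 ≤ t) : 0 ≤ gaussD t x := by
  apply mul_nonneg
  · exact Real.rpow_nonneg (by positivity) _
  · exact (Real.exp_pos _).le

lemma measurable_rpow_const (c : ℝ) : Measurable fun x : ℝ => x ^ c := by
  have : (fun x : ℝ => x ^ c) = fun x =>
      if x = 0 then (if c = 0 then 1 else 0)
      else Real.exp (Real.log x * c) * (if x < 0 then Real.cos (c * π) else 1) := by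
    funext x
    rcases lt_trichotomy x 0 with h | h | h
    · rw [Real.rpow_def_of_neg h, if_neg h.ne, if_pos h]
    · subst h
      rcases eq_or_ne c 0 with hc | hc
      · simp [hc]
      · simp [Real.zero_rpow hc, hc]
    · rw [Real.rpow_def_of_pos h, if_neg h.ne', if_neg (not_lt.2 h.le), mul_one]
  rw [this]
  apply Measurable.ite (measurableSet_eq) measurable_const
  apply Measurable.mul
  · exact (Real.measurable_log.mul measurable_const).exp
  · exact Measurable.ite (measurableSet_lt measurable_id measurable_const)
      measurable_const measurable_const

lemma measurable_gaussD : Measurable fun p : ℝ × ℝ => gaussD p.1 p.2 := by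
  unfold gaussD
  apply Measurable.mul
  · exact (measurable_rpow_const _).comp (measurable_const.mul measurable_fst)
  · exact (((measurable_snd.pow measurable_const).neg).div
      (measurable_const.mul measurable_fst)).exp

lemma continuous_gaussD_x (t : ℝ) : Continuous fun x => gaussD t x := by
  unfold gaussD
  fun_prop

lemma gaussD_eq (t : ℝ) : gaussD t = fun x =>
    (2 * Real.pi * t) ^ (-(1:ℝ)/2) * Real.exp (-(1/(2*t)) * x ^ 2) := by
  funext x; unfold gaussD; ring_nf

lemma integrable_gaussD {t : ℝ} (ht : 0 < t) : Integrable (gaussD t) := by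
  rw [gaussD_eq]
  exact (integrable_exp_neg_mul_sq (by positivity)).const_mul _

lemma integral_gaussD {t : ℝ} (ht : 0 < t) : ∫ x, gaussD t x = 1 := by
  rw [gaussD_eq]
  rw [MeasureTheory.integral_const_mul, integral_gaussian]
  have h1 : π / (1 / (2 * t)) = 2 * π * t := by field_simp
  rw [h1]
  have h2 : (0:ℝ) < 2 * π * t := by positivity
  rw [Real.sqrt_eq_rpow]
  rw [← Real.rpow_add h2]
  norm_num

lemma summable_gaussD {t : ℝ} (ht : 0 < t) (a : ℝ) :
    Summable fun n : ℤ => gaussD t (a + 2 * n) := by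
  set K : ℝ := (2 * Real.pi * t) ^ (-(1:ℝ)/2) with hK
  have K0 : 0 ≤ K := Real.rpow_nonneg (by positivity) _
  set r : ℝ := Real.exp (-1/t) with hr
  have hr0 : 0 ≤ r := (Real.exp_pos _).le
  have hr1 : r < 1 := by
    rw [hr]
    apply Real.exp_lt_one_iff.2
    rw [neg_div]
    simp [ht, one_div, inv_pos]
  have hgeom : Summable fun n : ℕ => (K * Real.exp (a^2/(2*t))) * r ^ n :=
    (summable_geometric_of_lt_one hr0 hr1).mul_left _
  have hb : ∀ (m : ℝ) (n : ℕ), m ^ 2 = (n:ℝ)^2 →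
      gaussD t (a + 2*m) ≤ (K * Real.exp (a^2/(2*t))) * r ^ n := by
    intro m n hm2
    have hn2 : (n:ℝ) ≤ (n:ℝ)^2 := by
      have := Nat.le_self_pow two_ne_zero n
      exact_mod_cast this
    have h1 : -((a + 2*m)^2) ≤ a^2 - 2*(n:ℝ) := by
      nlinarith [sq_nonneg (a + m)]
    have h2 : -((a + 2*m)^2) / (2*t) ≤ a^2/(2*t) + (n:ℝ) * (-1/t) := by
      have heq : a^2/(2*t) + (n:ℝ) * (-1/t) = (a^2 - 2*(n:ℝ)) / (2*t) := by
        field_simp; ring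
      rw [heq]
      exact div_le_div_of_nonneg_right h1 (by positivity) |>.trans_eq rfl
    calc gaussD t (a + 2*m) = K * Real.exp (-((a+2*m)^2) / (2*t)) := by
          unfold gaussD; rw [← hK]
      _ ≤ K * Real.exp (a^2/(2*t) + (n:ℝ) * (-1/t)) := by
          apply mul_le_mul_of_nonneg_left (Real.exp_le_exp.2 h2) K0
      _ = (K * Real.exp (a^2/(2*t))) * r ^ n := by
          rw [Real.exp_add, hr, ← Real.exp_nat_mul]
          ring
  apply Summable.of_nat_of_neg
  · apply hgeom.of_nonneg_of_le (fun n => gaussD_nonneg _ _ ht.le)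
    intro n
    exact hb ((n:ℤ):ℝ) n (by push_cast; ring)
  · apply hgeom.of_nonneg_of_le (fun n => gaussD_nonneg _ _ ht.le)
    intro n
    exact hb (((-(n:ℤ)):ℤ):ℝ) n (by push_cast; ring)

lemma summable_heatK_term {t : ℝ} (ht : 0 < t) (x y : ℝ) :
    Summable fun n : ℤ =>
      gaussD t (x - y + 2 * (n : ℝ)) + gaussD t (x + y + 2 * (n : ℝ)) :=
  (summable_gaussD ht (x - y)).add (summable_gaussD ht (x + y))

lemma heatK_nonneg {t : ℝ} (ht : 0 ≤ t) (x y : ℝ) : 0 ≤ heatK t x y :=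
  tsum_nonneg fun n => add_nonneg (gaussD_nonneg _ _ ht) (gaussD_nonneg _ _ ht)

lemma tendsto_intIcc_sum {f : ℤ → ℝ} (hf : Summable f) :
    Tendsto (fun N : ℕ => ∑ n ∈ Finset.Icc (-(N:ℤ)) (N:ℤ), f n) atTop (𝓝 (∑' n, f n)) := by
  apply hf.hasSum.comp
  apply Filter.tendsto_atTop_finset_of_monotone
  · intro a b hab
    exact Finset.Icc_subset_Icc (by exact_mod_cast neg_le_neg (Int.ofNat_le.2 hab))
      (by exact_mod_cast Int.ofNat_le.2 hab)
  · intro x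
    refine ⟨x.natAbs, Finset.mem_Icc.2 ⟨?_, ?_⟩⟩
    · rw [← Int.abs_eq_natAbs]; exact neg_abs_le x
    · rw [← Int.abs_eq_natAbs]; exact le_abs_self x

/-- Partial sums of the heat-kernel series. -/
noncomputable def heatKpart (N : ℕ) (t x y : ℝ) : ℝ :=
  ∑ n ∈ Finset.Icc (-(N:ℤ)) (N:ℤ),
    (gaussD t (x - y + 2 * (n : ℝ)) + gaussD t (x + y + 2 * (n : ℝ)))

lemma tendsto_heatKpart {t : ℝ} (ht : 0 < t) (x y : ℝ) :
    Tendsto (fun N => heatKpart N t x y) atTop (𝓝 (heatK t x y)) :=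
  tendsto_intIcc_sum (summable_heatK_term ht x y)

lemma measurable_heatKpart {α : Type*} [MeasurableSpace α] {τ u v : α → ℝ}
    (hτ : Measurable τ) (hu : Measurable u) (hv : Measurable v) (N : ℕ) :
    Measurable fun a => heatKpart N (τ a) (u a) (v a) := by
  apply Finset.measurable_sum
  intro n _
  apply Measurable.add
  · exact measurable_gaussD.comp (hτ.prodMk (((hu.sub hv).add_const _)))
  · exact measurable_gaussD.comp (hτ.prodMk (((hu.add hv).add_const _)))

lemma aestronglyMeasurable_heatK {α : Type*} [MeasurableSpace α] {μ : Measure α}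
    {τ u v : α → ℝ} (hτ : Measurable τ) (hu : Measurable u) (hv : Measurable v)
    (hpos : ∀ᵐ a ∂μ, 0 < τ a) :
    AEStronglyMeasurable (fun a => heatK (τ a) (u a) (v a)) μ := by
  apply aestronglyMeasurable_of_tendsto_ae (atTop : Filter ℕ)
    (f := fun N a => heatKpart N (τ a) (u a) (v a))
  · exact fun N => (measurable_heatKpart hτ hu hv N).aestronglyMeasurable
  · filter_upwards [hpos] with a ha
    exact tendsto_heatKpart ha _ _

section IntegralOne

variable {t x : ℝ}

lemma hasSum_integral_heatK_term (ht : 0 < t) (x : ℝ) :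
    HasSum (fun n : ℤ => ∫ y in Set.Icc (0:ℝ) 1,
      (gaussD t (x - y + 2 * (n : ℝ)) + gaussD t (x + y + 2 * (n : ℝ)))) 1 := by
  have key : ∀ n : ℤ, (∫ y in Set.Icc (0:ℝ) 1,
      (gaussD t (x - y + 2 * (n : ℝ)) + gaussD t (x + y + 2 * (n : ℝ))))
      = ∫ u in Set.Ioc (x + 2*(n:ℝ) - 1) (x + 2*(n:ℝ) + 1), gaussD t u := by
    intro n
    rw [integral_Icc_eq_integral_Ioc, ← intervalIntegral.integral_of_le (zero_le_one)]
    have h1 : (fun y => gaussD t (x - y + 2*(n:ℝ)) + gaussD t (x + y + 2*(n:ℝ)))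
        = fun y => gaussD t ((x + 2*(n:ℝ)) - y) + gaussD t ((x + 2*(n:ℝ)) + y) := by
      funext y; congr 2 <;> ring
    rw [h1]
    have ha : IntervalIntegrable (fun y : ℝ => gaussD t (x + 2*(n:ℝ) - y)) volume 0 1 := by
      apply Continuous.intervalIntegrable
      exact (continuous_gaussD_x t).comp (by fun_prop)
    have hb : IntervalIntegrable (fun y : ℝ => gaussD t (x + 2*(n:ℝ) + y)) volume 0 1 := by
      apply Continuous.intervalIntegrable
      exact (continuous_gaussD_x t).comp (by fun_prop)
    rw [intervalIntegral.integral_add ha hb]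
    rw [intervalIntegral.integral_comp_sub_left (fun u => gaussD t u) (x + 2*(n:ℝ))]
    rw [intervalIntegral.integral_comp_add_left (fun u => gaussD t u) (x + 2*(n:ℝ))]
    have h2 : x + 2*(n:ℝ) - 1 ≤ x + 2*(n:ℝ) := by linarith
    have h3 : x + 2*(n:ℝ) ≤ x + 2*(n:ℝ) + 1 := by linarith
    rw [sub_zero, add_zero]
    rw [intervalIntegral.integral_add_adjacent_intervals
      ((integrable_gaussD ht).intervalIntegrable) ((integrable_gaussD ht).intervalIntegrable)]
    rw [intervalIntegral.integral_of_le (by linarith)]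
  simp_rw [key]
  have hunion : (⋃ n : ℤ, Set.Ioc (x + 2*(n:ℝ) - 1) (x + 2*(n:ℝ) + 1)) = Set.univ := by
    apply Set.eq_univ_of_forall
    intro u
    rw [Set.mem_iUnion]
    refine ⟨⌈(u - x - 1)/2⌉, ?_⟩
    have hle := Int.le_ceil ((u - x - 1)/2)
    have hlt := Int.ceil_lt_add_one ((u - x - 1)/2)
    constructor <;> [nlinarith; nlinarith]
  have hd : Pairwise (Function.onFun Disjoint fun n : ℤ =>
      Set.Ioc (x + 2*(n:ℝ) - 1) (x + 2*(n:ℝ) + 1)) := by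
    intro m n hmn
    rw [Function.onFun, Set.Ioc_disjoint_Ioc]
    rcases lt_or_gt_of_ne hmn with h | h
    · have : (m:ℝ) + 1 ≤ (n:ℝ) := by exact_mod_cast Int.add_one_le_iff.2 h
      rw [min_le_iff]; left; rw [le_max_iff]; right; linarith
    · have : (n:ℝ) + 1 ≤ (m:ℝ) := by exact_mod_cast Int.add_one_le_iff.2 h
      rw [min_le_iff]; right; rw [le_max_iff]; left; linarith
  have hsum := hasSum_integral_iUnion (μ := volume)
    (f := gaussD t) (fun n : ℤ => measurableSet_Ioc) hd
    (by rw [hunion]; exact (integrable_gaussD ht).integrableOn)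
  rw [hunion] at hsum
  rwa [Measure.restrict_univ, integral_gaussD ht] at hsum

lemma lintegral_heatK_one (ht : 0 < t) (x : ℝ) :
    ∫⁻ y in Set.Icc (0:ℝ) 1, ENNReal.ofReal (heatK t x y) = 1 := by
  have hnn : ∀ (n : ℤ) (y : ℝ),
      0 ≤ gaussD t (x - y + 2 * (n : ℝ)) + gaussD t (x + y + 2 * (n : ℝ)) :=
    fun n y => add_nonneg (gaussD_nonneg _ _ ht.le) (gaussD_nonneg _ _ ht.le)
  have hcont : ∀ n : ℤ, Continuous fun y =>
      gaussD t (x - y + 2 * (n : ℝ)) + gaussD t (x + y + 2 * (n : ℝ)) := by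
    intro n
    exact ((continuous_gaussD_x t).comp (by fun_prop)).add
      ((continuous_gaussD_x t).comp (by fun_prop))
  have step1 : ∀ y : ℝ, ENNReal.ofReal (heatK t x y)
      = ∑' n : ℤ, ENNReal.ofReal
          (gaussD t (x - y + 2 * (n : ℝ)) + gaussD t (x + y + 2 * (n : ℝ))) := by
    intro y
    exact ENNReal.ofReal_tsum_of_nonneg (hnn · y) (summable_heatK_term ht x y)
  simp_rw [step1]
  rw [lintegral_tsum (fun n => ((hcont n).measurable.ennreal_ofReal).aemeasurable)]
  have step2 : ∀ n : ℤ, (∫⁻ y in Set.Icc (0:ℝ) 1, ENNReal.ofReal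
      (gaussD t (x - y + 2 * (n : ℝ)) + gaussD t (x + y + 2 * (n : ℝ))))
      = ENNReal.ofReal (∫ y in Set.Icc (0:ℝ) 1,
          (gaussD t (x - y + 2 * (n : ℝ)) + gaussD t (x + y + 2 * (n : ℝ)))) := by
    intro n
    rw [← ofReal_integral_eq_lintegral_ofReal
      ((hcont n).integrableOn_Icc) (Filter.Eventually.of_forall (hnn n))]
  simp_rw [step2]
  have hs := hasSum_integral_heatK_term ht x
  rw [← ENNReal.ofReal_tsum_of_nonneg
    (fun n => integral_nonneg (hnn n)) hs.summable, hs.tsum_eq]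
  norm_num

lemma integrableOn_heatK (ht : 0 < t) (x : ℝ) :
    IntegrableOn (heatK t x) (Set.Icc (0:ℝ) 1) := by
  constructor
  · exact aestronglyMeasurable_heatK measurable_const measurable_const measurable_id
      (Filter.Eventually.of_forall fun _ => ht)
  · rw [HasFiniteIntegral]
    have : ∀ y : ℝ, ‖heatK t x y‖ₑ = ENNReal.ofReal (heatK t x y) := by
      intro y
      rw [Real.enorm_of_nonneg (heatK_nonneg ht.le x y)]
    simp_rw [this]
    rw [lintegral_heatK_one ht x]
    exact ENNReal.one_lt_top

lemma setIntegral_heatK (ht : 0 < t) (x : ℝ) :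
    ∫ y in Set.Icc (0:ℝ) 1, heatK t x y = 1 := by
  rw [integral_eq_lintegral_of_nonneg_ae
    (Filter.Eventually.of_forall fun y => heatK_nonneg ht.le x y)
    (integrableOn_heatK ht x).1]
  rw [lintegral_heatK_one ht x]
  norm_num

end IntegralOne

lemma measurableSet_unitBox (k : ℕ) : MeasurableSet (unitBox k) :=
  MeasurableSet.univ_pi fun _ => measurableSet_Icc

lemma indicator_prod_heatK (k : ℕ) (t : ℝ) (x : Fin k → ℝ) :
    (unitBox k).indicator (fun y => ∏ i, heatK t (x i) (y i))
      = fun y => ∏ i, (Set.Icc (0:ℝ) 1).indicator (fun z => heatK t (x i) z) (y i) := by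
  funext y
  by_cases hy : y ∈ unitBox k
  · rw [Set.indicator_of_mem hy]
    apply Finset.prod_congr rfl
    intro i _
    rw [Set.indicator_of_mem (hy i (Set.mem_univ i))]
  · rw [Set.indicator_of_notMem hy]
    obtain ⟨i, hi⟩ : ∃ i, y i ∉ Set.Icc (0:ℝ) 1 := by
      by_contra h
      push_neg at h
      exact hy fun i _ => h i
    exact (Finset.prod_eq_zero (Finset.mem_univ i) (Set.indicator_of_notMem hi _)).symm

lemma integrableOn_prod_heatK {k : ℕ} {t : ℝ} (ht : 0 < t) (x : Fin k → ℝ) :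
    IntegrableOn (fun y : Fin k → ℝ => ∏ i, heatK t (x i) (y i)) (unitBox k) := by
  apply (integrable_indicator_iff (measurableSet_unitBox k)).1
  rw [indicator_prod_heatK]
  exact Integrable.fintype_prod (𝕜 := ℝ) fun i =>
    (integrableOn_heatK ht (x i)).integrable_indicator measurableSet_Icc

lemma setIntegral_prod_heatK {k : ℕ} {t : ℝ} (ht : 0 < t) (x : Fin k → ℝ) :
    ∫ y in unitBox k, ∏ i, heatK t (x i) (y i) = 1 := by
  rw [← integral_indicator (measurableSet_unitBox k), indicator_prod_heatK]
  rw [volume_pi]; beta_reduce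
  rw [integral_fintype_prod_eq_prod (𝕜 := ℝ) (ι := Fin k)
    (fun i z => (Set.Icc (0:ℝ) 1).indicator (fun w => heatK t (x i) w) z)]
  apply Finset.prod_eq_one
  intro i _
  rw [integral_indicator measurableSet_Icc, setIntegral_heatK ht]

lemma abs_setIntegral_mul_prod_le {k : ℕ} {t B : ℝ} (ht : 0 < t) (hB : 0 ≤ B)
    {G : (Fin k → ℝ) → ℝ} (hG : ∀ y ∈ unitBox k, |G y| ≤ B) (x : Fin k → ℝ) :
    |∫ y in unitBox k, G y * ∏ i, heatK t (x i) (y i)| ≤ B := by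
  have hprod_nonneg : ∀ y : Fin k → ℝ, 0 ≤ ∏ i, heatK t (x i) (y i) :=
    fun y => Finset.prod_nonneg fun i _ => heatK_nonneg ht.le _ _
  have h1 : |∫ y in unitBox k, G y * ∏ i, heatK t (x i) (y i)|
      ≤ ∫ y in unitBox k, |G y * ∏ i, heatK t (x i) (y i)| :=
by
    have := norm_integral_le_integral_norm
      (μ := volume.restrict (unitBox k))
      (f := fun y => G y * ∏ i, heatK t (x i) (y i))
    simp only [Real.norm_eq_abs] at this
    exact this
  have h2 : ∫ y in unitBox k, |G y * ∏ i, heatK t (x i) (y i)|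
      ≤ ∫ y in unitBox k, B * ∏ i, heatK t (x i) (y i) := by
    apply integral_mono_of_nonneg
    · exact Filter.Eventually.of_forall fun y => abs_nonneg _
    · exact (integrableOn_prod_heatK ht x).const_mul B
    · apply ae_restrict_of_forall_mem (measurableSet_unitBox k)
      intro y hy
      show |G y * ∏ i, heatK t (x i) (y i)| ≤ B * ∏ i, heatK t (x i) (y i)
      rw [abs_mul, abs_of_nonneg (hprod_nonneg y)]
      exact mul_le_mul_of_nonneg_right (hG y hy) (hprod_nonneg y)
  calc |∫ y in unitBox k, G y * ∏ i, heatK t (x i) (y i)|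
      ≤ ∫ y in unitBox k, B * ∏ i, heatK t (x i) (y i) := h1.trans h2
    _ = B := by rw [integral_const_mul, setIntegral_prod_heatK ht x, mul_one]

lemma abs_Ptk_le {k : ℕ} {t B : ℝ} (ht : 0 ≤ t) (hB : 0 ≤ B)
    {Φ : (Fin k → ℝ) → ℝ} (hΦb : ∀ y ∈ unitBox k, |Φ y| ≤ B)
    {x : Fin k → ℝ} (hx : x ∈ unitBox k) : |Ptk k t Φ x| ≤ B := by
  unfold Ptk
  split_ifs with h
  · exact hΦb x hx
  · exact abs_setIntegral_mul_prod_le (lt_of_le_of_ne ht (Ne.symm h)) hB hΦb x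

/-- continuity of the snoc map -/
lemma continuous_snocMap {k : ℕ} (i : Fin k) :
    Continuous (fun q : ℝ × (Fin k → ℝ) =>
      ((q.1, Fin.snoc q.2 (q.2 i)) : ℝ × (Fin (k+1) → ℝ))) := by
  apply Continuous.prodMk continuous_fst
  apply continuous_pi
  intro j
  induction j using Fin.lastCases with
  | last => simpa [Fin.snoc_last, Function.comp_def] using (continuous_apply i).comp continuous_snd
  | cast j =>
      simpa [Fin.snoc_castSucc, Function.comp_def] using (continuous_apply j).comp continuous_snd

lemma snocMap_mem_box {k : ℕ} (i : Fin k) {z : Fin k → ℝ} (hz : z ∈ unitBox k) :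
    Fin.snoc z (z i) ∈ unitBox (k+1) := by
  intro j _
  induction j using Fin.lastCases with
  | last => simpa [Fin.snoc_last] using hz i (Set.mem_univ i)
  | cast j => simpa [Fin.snoc_castSucc] using hz j (Set.mem_univ j)

lemma integrableOn_mul_prod_heatK {k : ℕ} {t C₁ : ℝ} (ht : 0 < t)
    {Φ : (Fin k → ℝ) → ℝ} (hΦc : ContinuousOn Φ (unitBox k))
    (hΦb : ∀ y ∈ unitBox k, |Φ y| ≤ C₁) (x : Fin k → ℝ) :
    IntegrableOn (fun y => Φ y * ∏ i, heatK t (x i) (y i)) (unitBox k) := by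
  apply Integrable.bdd_mul (c := C₁) (integrableOn_prod_heatK ht x)
    (hΦc.aestronglyMeasurable (measurableSet_unitBox k))
  apply ae_restrict_of_forall_mem (measurableSet_unitBox k)
  intro y hy
  simpa [Real.norm_eq_abs] using hΦb y hy

lemma abs_Ptk_sub_le {k : ℕ} {t B C₁ : ℝ} (ht : 0 ≤ t) (hB : 0 ≤ B)
    {Φ Ψ : (Fin k → ℝ) → ℝ}
    (hΦc : ContinuousOn Φ (unitBox k)) (hΨc : ContinuousOn Ψ (unitBox k))
    (hΦb : ∀ y ∈ unitBox k, |Φ y| ≤ C₁) (hΨb : ∀ y ∈ unitBox k, |Ψ y| ≤ C₁)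
    (hd : ∀ y ∈ unitBox k, |Φ y - Ψ y| ≤ B) {x : Fin k → ℝ} (hx : x ∈ unitBox k) :
    |Ptk k t Φ x - Ptk k t Ψ x| ≤ B := by
  unfold Ptk
  split_ifs with h
  · exact hd x hx
  · have ht' : 0 < t := lt_of_le_of_ne ht (Ne.symm h)
    rw [← integral_sub (integrableOn_mul_prod_heatK ht' hΦc hΦb x)
      (integrableOn_mul_prod_heatK ht' hΨc hΨb x)]
    simp_rw [← sub_mul]
    exact abs_setIntegral_mul_prod_le ht' hB hd x

lemma intervalIntegrable_Ptk_snoc {k : ℕ} {T t : ℝ} (ht : 0 < t) (htT : t ≤ T)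
    {ψ : ℝ → (Fin (k+1) → ℝ) → ℝ}
    (hψc : ContinuousOn (fun q : ℝ × (Fin (k+1) → ℝ) => ψ q.1 q.2)
      (Set.Icc (0:ℝ) T ×ˢ unitBox (k+1)))
    {B : ℝ} (hB : 0 ≤ B)
    (hψb : ∀ s ∈ Set.Icc (0:ℝ) T, ∀ w ∈ unitBox (k+1), |ψ s w| ≤ B)
    (i : Fin k) {x : Fin k → ℝ} (hx : x ∈ unitBox k) :
    IntervalIntegrable (fun s => Ptk k (t - s) (fun z => ψ s (Fin.snoc z (z i))) x)
      volume 0 t := by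
  rw [intervalIntegrable_iff_integrableOn_Ioc_of_le ht.le]
  set μ : Measure ℝ := volume.restrict (Set.Ioc 0 t) with hμ
  set S : Set (ℝ × (Fin k → ℝ)) := {p | p.2 ∈ unitBox k} with hS
  have hSmeas : MeasurableSet S := measurable_snd (measurableSet_unitBox k)
  have hne : ∀ᵐ s ∂μ, s ≠ t := by
    refine ae_iff.2 ?_
    have hset : {s : ℝ | ¬ s ≠ t} = {t} := by ext s; simp
    rw [hset, hμ, Measure.restrict_apply (measurableSet_singleton t)]
    exact measure_mono_null Set.inter_subset_left (measure_singleton t)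
  have hmem : ∀ᵐ s ∂μ, s ∈ Set.Ioc 0 t := ae_restrict_mem measurableSet_Ioc
  set F : ℝ × (Fin k → ℝ) → ℝ := fun p =>
    S.indicator (fun p => ψ p.1 (Fin.snoc p.2 (p.2 i))) p
      * ∏ j, heatK (t - p.1) (x j) (p.2 j) with hF
  have hprod_eq : μ.prod (volume : Measure (Fin k → ℝ))
      = (volume.prod volume).restrict
          (Set.Ioc 0 t ×ˢ (Set.univ : Set (Fin k → ℝ))) := by
    rw [← Measure.prod_restrict, Measure.restrict_univ, hμ]
  have hF_aesm : AEStronglyMeasurable F (μ.prod volume) := by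
    apply AEStronglyMeasurable.mul
    · rw [aestronglyMeasurable_indicator_iff hSmeas]
      have hμprod : (μ.prod (volume : Measure (Fin k → ℝ))).restrict S
          = (volume.prod volume).restrict (Set.Ioc 0 t ×ˢ unitBox k) := by
        rw [hprod_eq, Measure.restrict_restrict hSmeas]
        congr 1
        ext p
        simp only [hS, Set.mem_inter_iff, Set.mem_setOf_eq, Set.mem_prod, Set.mem_univ,
          and_true]
        tauto
      rw [hμprod]
      have hinner : ContinuousOn
          (fun q : ℝ × (Fin k → ℝ) => ψ q.1 (Fin.snoc q.2 (q.2 i)))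
          (Set.Icc (0:ℝ) T ×ˢ unitBox k) := by
        apply ContinuousOn.comp hψc ((continuous_snocMap i).continuousOn)
        intro q hq
        exact ⟨hq.1, snocMap_mem_box i hq.2⟩
      apply (hinner.mono ?_).aestronglyMeasurable
        (measurableSet_Ioc.prod (measurableSet_unitBox k))
      intro q hq
      exact ⟨⟨hq.1.1.le, hq.1.2.trans htT⟩, hq.2⟩
    · apply Finset.aestronglyMeasurable_fun_prod
      intro j _
      apply aestronglyMeasurable_heatK
        (measurable_const.sub measurable_fst) measurable_const
        ((measurable_pi_apply j).comp measurable_snd)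
      have hnull : (μ.prod (volume : Measure (Fin k → ℝ)))
          {p : ℝ × (Fin k → ℝ) | ¬ 0 < t - p.1} = 0 := by
        have hsub : {p : ℝ × (Fin k → ℝ) | ¬ 0 < t - p.1}
            = (Set.Ici t) ×ˢ (Set.univ : Set (Fin k → ℝ)) := by
          ext p
          simp [Set.mem_prod, not_lt, sub_nonpos]
        rw [hsub, Measure.prod_prod, hμ,
          Measure.restrict_apply measurableSet_Ici]
        have hsing : Set.Ici t ∩ Set.Ioc 0 t ⊆ {t} := by
          intro s hs
          have := le_antisymm hs.2.2 hs.1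
          simp [this]
        rw [measure_mono_null hsing (measure_singleton t)]
        simp
      exact ae_iff.2 hnull
  have hg_aesm : AEStronglyMeasurable (fun s => ∫ y, F (s, y)) μ :=
    hF_aesm.integral_prod_right'
  have hae : (fun s => Ptk k (t - s) (fun z => ψ s (Fin.snoc z (z i))) x)
      =ᵐ[μ] fun s => ∫ y, F (s, y) := by
    filter_upwards [hne, hmem] with s hsne hsmem
    have hts : t - s ≠ 0 := sub_ne_zero.2 (Ne.symm hsne)
    show Ptk k (t - s) (fun z => ψ s (Fin.snoc z (z i))) x = _
    rw [Ptk, if_neg hts, ← integral_indicator (measurableSet_unitBox k)]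
    congr 1
    funext y
    by_cases hy : y ∈ unitBox k
    · rw [Set.indicator_of_mem hy, hF]
      simp only
      rw [Set.indicator_of_mem (show ((s, y) : ℝ × (Fin k → ℝ)) ∈ S from hy)]
    · rw [Set.indicator_of_notMem hy, hF]
      simp only
      rw [Set.indicator_of_notMem (show ((s, y) : ℝ × (Fin k → ℝ)) ∉ S from hy),
        zero_mul]
  have hfin : IsFiniteMeasure μ := by
    constructor
    rw [hμ, Measure.restrict_apply_univ]
    exact measure_Ioc_lt_top
  apply Integrable.mono' (integrable_const B) (hg_aesm.congr hae.symm)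
  filter_upwards [hmem] with s hsmem
  have hs0T : s ∈ Set.Icc (0:ℝ) T := ⟨hsmem.1.le, hsmem.2.trans htT⟩
  have hts0 : 0 ≤ t - s := sub_nonneg.2 hsmem.2
  rw [Real.norm_eq_abs]
  apply abs_Ptk_le hts0 hB ?_ hx
  intro z hz
  exact hψb s hs0T _ (snocMap_mem_box i hz)

lemma continuousOn_slice_snoc {k : ℕ} {T : ℝ} {ψ : ℝ → (Fin (k+1) → ℝ) → ℝ}
    (hψc : ContinuousOn (fun q : ℝ × (Fin (k+1) → ℝ) => ψ q.1 q.2)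
      (Set.Icc (0:ℝ) T ×ˢ unitBox (k+1)))
    {s : ℝ} (hs : s ∈ Set.Icc (0:ℝ) T) (i : Fin k) :
    ContinuousOn (fun z : Fin k → ℝ => ψ s (Fin.snoc z (z i))) (unitBox k) := by
  have hmap : Continuous (fun z : Fin k → ℝ =>
      ((s, Fin.snoc z (z i)) : ℝ × (Fin (k+1) → ℝ))) :=
    (continuous_snocMap i).comp (Continuous.prodMk continuous_const continuous_id)
  apply ContinuousOn.comp hψc hmap.continuousOn
  intro z hz
  exact ⟨hs, snocMap_mem_box i hz⟩

/-- Gronwall-type iterated bound for two bounded solutions of the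
limiting BBGKY hierarchy:
`|γ^(k)(t) − γ̃^(k)(t)| ≤ 2 C^{k+M} (k(k+1)⋯(k+M−1)/M!) t^M`. -/
theorem limiting_hierarchy_iterated_bound :
    ∀ C : ℝ, 1 ≤ C → ∀ T > (0:ℝ),
      ∀ γ γ' : (k : ℕ) → ℝ → (Fin k → ℝ) → ℝ,
        SatisfiesLimitingHierarchy T γ → SatisfiesLimitingHierarchy T γ' →
        (∀ k : ℕ, 1 ≤ k → γ k 0 = γ' k 0) →
        (∀ k : ℕ, 1 ≤ k → ∀ t ∈ Set.Icc (0:ℝ) T, ∀ x ∈ unitBox k, |γ k t x| ≤ C ^ k) →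
        (∀ k : ℕ, 1 ≤ k → ∀ t ∈ Set.Icc (0:ℝ) T, ∀ x ∈ unitBox k, |γ' k t x| ≤ C ^ k) →
        ∀ k : ℕ, 1 ≤ k → ∀ M : ℕ, 1 ≤ M → ∀ t ∈ Set.Icc (0:ℝ) T, ∀ x ∈ unitBox k,
          |γ k t x - γ' k t x|
            ≤ 2 * C ^ (k + M)
                * ((∏ j ∈ Finset.range M, ((k : ℝ) + j)) / (Nat.factorial M : ℝ))
                * t ^ M := by
  intro C hC T hT γ γ' hγ hγ' h0 hbγ hbγ'
  have hC0 : (0:ℝ) < C := lt_of_lt_of_le one_pos hC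
  suffices H : ∀ M : ℕ, ∀ k : ℕ, 1 ≤ k → ∀ t ∈ Set.Icc (0:ℝ) T, ∀ x ∈ unitBox k,
      |γ k t x - γ' k t x|
        ≤ 2 * C ^ (k + M)
            * ((∏ j ∈ Finset.range M, ((k : ℝ) + j)) / (Nat.factorial M : ℝ))
            * t ^ M by
    intro k hk M _ t ht x hx
    exact H M k hk t ht x hx
  intro M
  induction M with
  | zero =>
      intro k hk t ht x hx
      simp only [Nat.add_zero, Finset.range_zero, Finset.prod_empty, Nat.factorial_zero,
        Nat.cast_one, pow_zero, mul_one]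
      have h1 := hbγ k hk t ht x hx
      have h2 := hbγ' k hk t ht x hx
      have h3 : |γ k t x - γ' k t x| ≤ |γ k t x| + |γ' k t x| := abs_sub _ _
      calc |γ k t x - γ' k t x| ≤ C ^ k + C ^ k := h3.trans (by linarith)
        _ = 2 * C ^ k * (1 / 1) := by ring
  | succ M ih =>
      intro k hk t ht x hx
      rcases eq_or_lt_of_le ht.1 with h0t | h0t
      · -- t = 0
        rw [← h0t]
        have : γ k 0 = γ' k 0 := h0 k hk
        rw [this]
        simp [zero_pow (Nat.succ_ne_zero M)]
      · -- 0 < t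
        have hidγ := hγ.2 k hk t ht x hx
        have hidγ' := hγ'.2 k hk t ht x hx
        have hP0 : Ptk k t (γ k 0) x = Ptk k t (γ' k 0) x := by rw [h0 k hk]
        set A : Fin k → ℝ := fun i =>
          ∫ s in (0:ℝ)..t, Ptk k (t - s) (fun z => γ (k+1) s (Fin.snoc z (z i))) x with hA
        set A' : Fin k → ℝ := fun i =>
          ∫ s in (0:ℝ)..t, Ptk k (t - s) (fun z => γ' (k+1) s (Fin.snoc z (z i))) x with hA'
        have hdiff : γ k t x - γ' k t x = -(∑ i : Fin k, (A i - A' i)) := by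
          rw [hidγ, hidγ', hP0, Finset.sum_sub_distrib]
          ring
        set c : ℝ := 2 * C ^ (k + 1 + M)
          * ((∏ j ∈ Finset.range M, (((k+1 : ℕ) : ℝ) + j)) / (Nat.factorial M : ℝ)) with hc
        have hQ0 : 0 ≤ ∏ j ∈ Finset.range M, (((k+1 : ℕ) : ℝ) + j) :=
          Finset.prod_nonneg fun j _ => by positivity
        have hc0 : 0 ≤ c := by
          rw [hc]
          have : (0:ℝ) < Nat.factorial M := by exact_mod_cast Nat.factorial_pos M
          positivity
        have hk1 : 1 ≤ k + 1 := Nat.le_add_left 1 k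
        have hCk1 : (0:ℝ) ≤ C ^ (k+1) := (pow_pos hC0 _).le
        have hib : ∀ i : Fin k, |A i - A' i| ≤ c * (t ^ (M+1) / (M+1)) := by
          intro i
          have hiiγ : IntervalIntegrable
              (fun s => Ptk k (t - s) (fun z => γ (k+1) s (Fin.snoc z (z i))) x)
              volume 0 t :=
            intervalIntegrable_Ptk_snoc h0t ht.2 (hγ.1 (k+1) hk1) hCk1
              (hbγ (k+1) hk1) i hx
          have hiiγ' : IntervalIntegrable
              (fun s => Ptk k (t - s) (fun z => γ' (k+1) s (Fin.snoc z (z i))) x)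
              volume 0 t :=
            intervalIntegrable_Ptk_snoc h0t ht.2 (hγ'.1 (k+1) hk1) hCk1
              (hbγ' (k+1) hk1) i hx
          have hAsub : A i - A' i = ∫ s in (0:ℝ)..t,
              (Ptk k (t - s) (fun z => γ (k+1) s (Fin.snoc z (z i))) x
                - Ptk k (t - s) (fun z => γ' (k+1) s (Fin.snoc z (z i))) x) := by
            rw [hA, hA', ← intervalIntegral.integral_sub hiiγ hiiγ']
          rw [hAsub]
          have hgint : IntervalIntegrable (fun s : ℝ => c * s ^ M) volume 0 t :=
            (Continuous.intervalIntegrable (by fun_prop) _ _)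
          have hptw : ∀ᵐ s ∂volume.restrict (Set.uIoc (0:ℝ) t),
              ‖Ptk k (t - s) (fun z => γ (k+1) s (Fin.snoc z (z i))) x
                - Ptk k (t - s) (fun z => γ' (k+1) s (Fin.snoc z (z i))) x‖
                ≤ c * s ^ M := by
            rw [Set.uIoc_of_le h0t.le]
            filter_upwards [ae_restrict_mem measurableSet_Ioc] with s hs
            have hs0T : s ∈ Set.Icc (0:ℝ) T := ⟨hs.1.le, hs.2.trans ht.2⟩
            have hts0 : 0 ≤ t - s := sub_nonneg.2 hs.2
            rw [Real.norm_eq_abs]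
            apply abs_Ptk_sub_le hts0 (mul_nonneg hc0 (pow_nonneg hs.1.le M))
              (continuousOn_slice_snoc (hγ.1 (k+1) hk1) hs0T i)
              (continuousOn_slice_snoc (hγ'.1 (k+1) hk1) hs0T i)
              (fun z hz => hbγ (k+1) hk1 s hs0T _ (snocMap_mem_box i hz))
              (fun z hz => hbγ' (k+1) hk1 s hs0T _ (snocMap_mem_box i hz))
              ?_ hx
            intro z hz
            have := ih (k+1) hk1 s hs0T (Fin.snoc z (z i)) (snocMap_mem_box i hz)
            calc |γ (k+1) s (Fin.snoc z (z i)) - γ' (k+1) s (Fin.snoc z (z i))|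
                ≤ 2 * C ^ (k + 1 + M)
                  * ((∏ j ∈ Finset.range M, (((k+1 : ℕ) : ℝ) + j)) / (Nat.factorial M : ℝ))
                  * s ^ M := this
              _ = c * s ^ M := by rw [hc]
          have := intervalIntegral.norm_integral_le_abs_of_norm_le hptw hgint
          rw [Real.norm_eq_abs] at this
          apply this.trans
          have hval : ∫ s in (0:ℝ)..t, c * s ^ M = c * (t ^ (M+1) / (M+1)) := by
            rw [intervalIntegral.integral_const_mul, integral_pow]
            norm_num
          rw [hval, abs_of_nonneg]
          positivity
        -- assemble
        rw [hdiff, abs_neg]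
        have hsum : |∑ i : Fin k, (A i - A' i)| ≤ ∑ i : Fin k, |A i - A' i| :=
          Finset.abs_sum_le_sum_abs _ _
        have hsum2 : ∑ i : Fin k, |A i - A' i| ≤ (k : ℝ) * (c * (t ^ (M+1) / (M+1))) := by
          calc ∑ i : Fin k, |A i - A' i| ≤ ∑ _i : Fin k, c * (t ^ (M+1) / (M+1)) :=
              Finset.sum_le_sum fun i _ => hib i
            _ = (k : ℝ) * (c * (t ^ (M+1) / (M+1))) := by
              rw [Finset.sum_const, Finset.card_univ, Fintype.card_fin, nsmul_eq_mul]
        have harith : (k : ℝ) * (c * (t ^ (M+1) / (M+1)))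
            = 2 * C ^ (k + (M+1))
              * ((∏ j ∈ Finset.range (M+1), ((k : ℝ) + j)) / (Nat.factorial (M+1) : ℝ))
              * t ^ (M+1) := by
          have hprod : ∏ j ∈ Finset.range (M+1), ((k : ℝ) + j)
              = (k : ℝ) * ∏ j ∈ Finset.range M, (((k+1 : ℕ) : ℝ) + j) := by
            rw [Finset.prod_range_succ']
            have hcongr : ∀ j ∈ Finset.range M,
                ((k:ℝ) + ((j:ℕ)+1 : ℕ)) = (((k+1 : ℕ) : ℝ) + j) := by
              intro j _
              push_cast
              ring
            rw [Finset.prod_congr rfl hcongr]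
            push_cast
            ring
          have hfact : (Nat.factorial (M+1) : ℝ) = ((M:ℝ)+1) * (Nat.factorial M : ℝ) := by
            rw [Nat.factorial_succ]
            push_cast
            ring
          have hpow : C ^ (k + 1 + M) = C ^ (k + (M+1)) := by
            congr 1
            omega
          have hfM : (Nat.factorial M : ℝ) ≠ 0 := by
            exact_mod_cast (Nat.factorial_pos M).ne'
          have hM1 : ((M:ℝ)+1) ≠ 0 := by positivity
          rw [hc, hprod, hfact, hpow]
          field_simp
        calc |∑ i : Fin k, (A i - A' i)| ≤ (k : ℝ) * (c * (t ^ (M+1) / (M+1))) :=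
            hsum.trans hsum2
          _ = _ := harith
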